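/- arXiv:2309.04236 — 4 statements merged into one kernel-verified Lean document; each statement's English description precedes it below -/
import Mathlib

section
/- Let H, K and F be separable Hilbert spaces, let Z : H → K be a bounded linear operator with adjoint Z* : K → H, and let P be the orthogonal projection of H onto the closure of the range of Z*. Then for every bounded linear operator G : F → H and every λ > 0, ‖(I − P) G‖ ≤ λ^{1/2} ‖(Z*Z + λI)^{-1/2} G‖. -/
set_option maxHeartbeats 1000000


open ContinuousLinearMap

/-- Real powers of a (positive) bounded operator on a real Hilbert space, defined via the
continuous functional calculus. -/
noncomputable def opow {E : Type*} [NormedAddCommGroup E] [InnerProductSpace ℝ E]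
    [CompleteSpace E]
    [ContinuousFunctionalCalculus ℝ (E →L[ℝ] E) IsSelfAdjoint]
    (A : E →L[ℝ] E) (t : ℝ) : E →L[ℝ] E :=
  cfc (fun x : ℝ => x ^ t) A

/-- the projection lemma (Rudi et al., Proposition 3). -/
theorem stmt2
    {H K F : Type*}
    [NormedAddCommGroup H] [InnerProductSpace ℝ H] [CompleteSpace H]
    [TopologicalSpace.SeparableSpace H]
    [NormedAddCommGroup K] [InnerProductSpace ℝ K] [CompleteSpace K]
    [TopologicalSpace.SeparableSpace K]
    [NormedAddCommGroup F] [InnerProductSpace ℝ F] [CompleteSpace F]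
    [TopologicalSpace.SeparableSpace F]
    [ContinuousFunctionalCalculus ℝ (H →L[ℝ] H) IsSelfAdjoint]
    (Z : H →L[ℝ] K)
    (P : H →L[ℝ] H) (hPsa : IsSelfAdjoint P) (hPidem : P ∘L P = P)
    (hPrange : LinearMap.range (P : H →ₗ[ℝ] H) = (LinearMap.range (adjoint Z : K →ₗ[ℝ] H)).topologicalClosure)
    (G : F →L[ℝ] H) (lam : ℝ) (hlam : 0 < lam) :
    ‖(1 - P) ∘L G‖ ≤
      lam ^ (1 / 2 : ℝ) * ‖opow (adjoint Z ∘L Z + lam • 1) (-(1 / 2)) ∘L G‖ := by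
  set A : H →L[ℝ] H := adjoint Z ∘L Z with hA
  set B : H →L[ℝ] H := A + lam • 1 with hB
  set Q : H →L[ℝ] H := 1 - P with hQ
  -- A is positive
  have hApos : A.IsPositive := by
    simpa [ContinuousLinearMap.one_def] using ContinuousLinearMap.isPositive_one.adjoint_conj Z
  -- spectrum of B is contained in [lam, ∞)
  have hspec : ∀ x ∈ spectrum ℝ B, lam ≤ x := by
    intro x hx
    have hxA : x - lam ∈ spectrum ℝ A := by
      have heq : algebraMap ℝ (H →L[ℝ] H) (x - lam) - A = algebraMap ℝ (H →L[ℝ] H) x - B := by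
        rw [map_sub, Algebra.algebraMap_eq_smul_one (A := H →L[ℝ] H) lam, hB]
        abel
      rw [spectrum.mem_iff] at hx ⊢
      rwa [heq]
    have h0 : 0 ≤ x - lam := by
      have := hApos.spectrumRestricts
      rw [SpectrumRestricts.nnreal_iff] at this
      exact this _ hxA
    linarith
  have hBsa : IsSelfAdjoint B := by
    rw [hB]
    refine hApos.isSelfAdjoint.add ?_
    rw [IsSelfAdjoint, star_smul, star_one, star_trivial]
  -- continuity of the rpow functions on the spectrum
  have hcont : ∀ t : ℝ, ContinuousOn (fun x : ℝ => x ^ t) (spectrum ℝ B) := by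
    intro t x hx
    exact (Real.continuousAt_rpow_const x t
      (Or.inl (ne_of_gt (lt_of_lt_of_le hlam (hspec x hx))))).continuousWithinAt
  set S : H →L[ℝ] H := opow B (1 / 2) with hS
  set T : H →L[ℝ] H := opow B (-(1 / 2)) with hT
  have hSsa : IsSelfAdjoint S := cfc_predicate _ B
  have hST : S * T = 1 := by
    rw [hS, hT, opow, opow, ← cfc_mul _ _ B (hcont _) (hcont _)]
    have heqn : cfc (fun x : ℝ => x ^ (1 / 2 : ℝ) * x ^ (-(1 / 2) : ℝ)) B
        = cfc (fun _ : ℝ => (1 : ℝ)) B := by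
      apply cfc_congr
      intro x hx
      have hx0 : 0 < x := lt_of_lt_of_le hlam (hspec x hx)
      show x ^ (1 / 2 : ℝ) * x ^ (-(1 / 2) : ℝ) = 1
      rw [← Real.rpow_add hx0]
      norm_num
    rw [heqn]
    exact cfc_const_one ℝ B hBsa
  have hSS : S * S = B := by
    rw [hS, opow, ← cfc_mul _ _ B (hcont _) (hcont _)]
    calc cfc (fun x : ℝ => x ^ (1 / 2 : ℝ) * x ^ (1 / 2 : ℝ)) B
        = cfc (fun x : ℝ => x) B := by
          apply cfc_congr
          intro x hx
          show x ^ (1 / 2 : ℝ) * x ^ (1 / 2 : ℝ) = x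
          rw [← Real.rpow_add (lt_of_lt_of_le hlam (hspec x hx))]
          norm_num
      _ = B := cfc_id' ℝ B hBsa
  -- Q is a self-adjoint idempotent with Q ∘L B = lam • Q
  have hQsa : IsSelfAdjoint Q := (IsSelfAdjoint.one (H →L[ℝ] H)).sub hPsa
  have hP2 : ∀ x : H, P (P x) = P x := fun x => by
    have := ContinuousLinearMap.ext_iff.mp hPidem x
    simpa using this
  have hQidem : Q ∘L Q = Q := by
    ext x
    simp only [hQ, ContinuousLinearMap.comp_apply, ContinuousLinearMap.sub_apply,
      ContinuousLinearMap.one_apply, map_sub, hP2]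
    abel
  have hQZ : Q ∘L adjoint Z = 0 := by
    ext y
    have hmem : adjoint Z y ∈ LinearMap.range (P : H →ₗ[ℝ] H) := by
      rw [hPrange]
      exact (LinearMap.range (adjoint Z : K →ₗ[ℝ] H)).le_topologicalClosure ⟨y, rfl⟩
    obtain ⟨u, hu⟩ := hmem
    have hPfix : P (adjoint Z y) = adjoint Z y := by
      rw [← hu]; exact hP2 u
    simp [hQ, hPfix]
  have hQB : Q ∘L B = lam • Q := by
    rw [hB, ContinuousLinearMap.comp_add, hA, ← ContinuousLinearMap.comp_assoc, hQZ]
    ext x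
    simp
  -- norm of Q is at most 1
  have hQnorm : ‖Q‖ ≤ 1 := by
    have h1 : ‖Q‖ * ‖Q‖ = ‖Q‖ := by
      rw [← ContinuousLinearMap.norm_adjoint_comp_self Q, hQsa.adjoint_eq, hQidem]
    nlinarith [norm_nonneg Q]
  -- key bound : ‖Q ∘L S‖ ≤ √lam
  have hQS : ‖Q ∘L S‖ ≤ Real.sqrt lam := by
    have hadj : adjoint (Q ∘L S) = S ∘L Q := by
      rw [ContinuousLinearMap.adjoint_comp, hQsa.adjoint_eq, hSsa.adjoint_eq]
    have hkey : (Q ∘L S) ∘L (S ∘L Q) = lam • Q := by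
      calc (Q ∘L S) ∘L (S ∘L Q) = (Q ∘L (S ∘L S)) ∘L Q := by
            simp only [ContinuousLinearMap.comp_assoc]
        _ = (Q ∘L B) ∘L Q := by rw [show S ∘L S = B from hSS]
        _ = (lam • Q) ∘L Q := by rw [hQB]
        _ = lam • (Q ∘L Q) := by rw [ContinuousLinearMap.smul_comp]
        _ = lam • Q := by rw [hQidem]
    have hnorm2 : ‖Q ∘L S‖ * ‖Q ∘L S‖ ≤ lam := by
      have := ContinuousLinearMap.norm_adjoint_comp_self (S ∘L Q)
      rw [show adjoint (S ∘L Q) = Q ∘L S by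
        rw [ContinuousLinearMap.adjoint_comp, hQsa.adjoint_eq, hSsa.adjoint_eq]] at this
      have hnq : ‖S ∘L Q‖ = ‖Q ∘L S‖ := by
        rw [← hadj]
        exact LinearIsometryEquiv.norm_map adjoint (Q ∘L S)
      rw [hkey, hnq] at this
      rw [← this]
      calc ‖lam • Q‖ ≤ ‖lam‖ * ‖Q‖ := ContinuousLinearMap.opNorm_smul_le lam Q
        _ = lam * ‖Q‖ := by rw [Real.norm_eq_abs, abs_of_pos hlam]
        _ ≤ lam * 1 := mul_le_mul_of_nonneg_left hQnorm hlam.le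
        _ = lam := mul_one lam
    exact Real.le_sqrt_of_sq_le (by rw [sq]; exact hnorm2)
  -- put everything together
  have hfact : Q ∘L G = (Q ∘L S) ∘L (T ∘L G) := by
    have : (Q ∘L S) ∘L (T ∘L G) = (Q ∘L (S ∘L T)) ∘L G := by
      simp only [ContinuousLinearMap.comp_assoc]
    rw [this, show S ∘L T = 1 from hST]
    rfl
  calc ‖Q ∘L G‖ = ‖(Q ∘L S) ∘L (T ∘L G)‖ := by rw [hfact]
    _ ≤ ‖Q ∘L S‖ * ‖T ∘L G‖ := ContinuousLinearMap.opNorm_comp_le _ _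
    _ ≤ Real.sqrt lam * ‖T ∘L G‖ :=
        mul_le_mul_of_nonneg_right hQS (norm_nonneg _)
    _ = lam ^ (1 / 2 : ℝ) * ‖T ∘L G‖ := by rw [Real.sqrt_eq_rpow]
end

section
/- Let H and K be separable Hilbert spaces, let A be a positive bounded linear operator on H, let V : K → H be a bounded linear operator with V*V = id_K, and let B be a bounded linear operator on K. Then for all real numbers r and s with 0 ≤ r ≤ 1/2 and 0 ≤ s ≤ 1/2, ‖A^r V B V* A^s‖ ≤ ‖(V*AV)^r B (V*AV)^s‖, where the fractional powers of the positive operators A and V*AV are defined by the continuous functional calculus. -/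
open ContinuousLinearMap

namespace Stmt3Aux

open MeasureTheory Set
open scoped InnerProductSpace ENNReal NNReal



/-- The normalizing constant. -/
noncomputable def Ip (p : ℝ) : ℝ := ∫ t in Ioi (0:ℝ), t ^ (p-1) / (1+t)

lemma Ioi_eq_union : Ioi (0:ℝ) = Ioc 0 1 ∪ Ioi 1 := by
  ext t
  simp only [mem_Ioi, mem_union, mem_Ioc]
  constructor
  · intro h; rcases le_or_gt t 1 with h1 | h1
    · exact Or.inl ⟨h, h1⟩
    · exact Or.inr h1
  · rintro (⟨h, _⟩ | h)
    · exact h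
    · linarith

lemma integrableOn_aux {p : ℝ} (hp : 0 < p) (hp1 : p < 1) {M : ℝ} (hM : 0 ≤ M) :
    IntegrableOn (fun t : ℝ => min (t ^ (p-1)) (M * t ^ (p-2))) (Ioi 0) := by
  have h1 : IntegrableOn (fun t : ℝ => t ^ (p-1)) (Ioc (0:ℝ) 1) := by
    have := intervalIntegral.intervalIntegrable_rpow' (r := p - 1) (a := 0) (b := 1)
      (by linarith)
    rwa [intervalIntegrable_iff_integrableOn_Ioc_of_le (by norm_num)] at this
  have h2 : IntegrableOn (fun t : ℝ => M * t ^ (p-2)) (Ioi (1:ℝ)) :=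
    (integrableOn_Ioi_rpow_of_lt (by linarith) one_pos).const_mul M
  have hmeas : Measurable (fun t : ℝ => min (t ^ (p-1)) (M * t ^ (p-2))) := by
    fun_prop
  have key : IntegrableOn (fun t : ℝ => min (t ^ (p-1)) (M * t ^ (p-2))) (Ioc 0 1 ∪ Ioi 1) := by
    refine IntegrableOn.union ?_ ?_
    · refine Integrable.mono h1 (hmeas.aestronglyMeasurable.restrict) ?_
      filter_upwards [ae_restrict_mem measurableSet_Ioc] with t ht
      have ht0 : 0 < t := ht.1
      have hmn : 0 ≤ min (t ^ (p-1)) (M * t ^ (p-2)) :=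
        le_min (Real.rpow_nonneg ht0.le _) (mul_nonneg hM (Real.rpow_nonneg ht0.le _))
      rw [Real.norm_eq_abs, Real.norm_eq_abs, abs_of_nonneg hmn,
        abs_of_nonneg (Real.rpow_nonneg ht0.le _)]
      exact min_le_left _ _
    · refine Integrable.mono h2 (hmeas.aestronglyMeasurable.restrict) ?_
      filter_upwards [ae_restrict_mem measurableSet_Ioi] with t ht
      have ht0 : (0:ℝ) < t := lt_trans one_pos ht
      have hmn : 0 ≤ min (t ^ (p-1)) (M * t ^ (p-2)) :=
        le_min (Real.rpow_nonneg ht0.le _) (mul_nonneg hM (Real.rpow_nonneg ht0.le _))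
      rw [Real.norm_eq_abs, Real.norm_eq_abs, abs_of_nonneg hmn,
        abs_of_nonneg (mul_nonneg hM (Real.rpow_nonneg ht0.le _))]
      exact min_le_right _ _
  rwa [Ioi_eq_union]

lemma integrand_le_aux {p : ℝ} {M t x : ℝ} (ht : 0 < t) (hx0 : 0 ≤ x) (hxM : x ≤ M) :
    t ^ (p-1) * (x / (x + t)) ≤ min (t ^ (p-1)) (M * t ^ (p-2)) := by
  have hxt : 0 < x + t := by linarith
  have htp : 0 ≤ t ^ (p-1) := Real.rpow_nonneg ht.le _
  refine le_min ?_ ?_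
  · have h1 : x / (x + t) ≤ 1 := by rw [div_le_one hxt]; linarith
    calc t ^ (p-1) * (x / (x + t)) ≤ t ^ (p-1) * 1 :=
          mul_le_mul_of_nonneg_left h1 htp
    _ = t ^ (p-1) := mul_one _
  · have h2 : x / (x + t) ≤ M / t := by
      apply div_le_div₀ (le_trans hx0 hxM) hxM ht (by linarith)
    calc t ^ (p-1) * (x / (x + t)) ≤ t ^ (p-1) * (M / t) :=
          mul_le_mul_of_nonneg_left h2 htp
    _ = M * t ^ (p-2) := by
        rw [show p - 2 = (p-1) + (-1) by ring, Real.rpow_add ht, Real.rpow_neg_one]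
        field_simp

lemma integrand_nonneg_aux {p : ℝ} {t x : ℝ} (ht : 0 ≤ t) (hx0 : 0 ≤ x) :
    0 ≤ t ^ (p-1) * (x / (x + t)) :=
  mul_nonneg (Real.rpow_nonneg ht _) (div_nonneg hx0 (by linarith))

lemma h_integrableOn {p : ℝ} (hp : 0 < p) (hp1 : p < 1) :
    IntegrableOn (fun t : ℝ => t ^ (p-1) / (1+t)) (Ioi 0) := by
  refine Integrable.mono (integrableOn_aux hp hp1 (zero_le_one)) ?_ ?_
  · exact (Measurable.aestronglyMeasurable (by fun_prop)).restrict
  · filter_upwards [ae_restrict_mem measurableSet_Ioi] with t ht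
    have ht0 : (0:ℝ) < t := ht
    have h1t : (0:ℝ) < 1 + t := by linarith
    have key : t ^ (p-1) / (1+t) = t ^ (p-1) * (1 / (1 + t)) := by ring
    have := integrand_le_aux (p := p) (M := 1) ht0 zero_le_one le_rfl
    rw [Real.norm_eq_abs, Real.norm_eq_abs,
      abs_of_nonneg (div_nonneg (Real.rpow_nonneg ht0.le _) h1t.le),
      abs_of_nonneg (le_min (Real.rpow_nonneg ht0.le _)
        (mul_nonneg zero_le_one (Real.rpow_nonneg ht0.le _))), key]
    simpa using this

lemma Ip_pos {p : ℝ} (hp : 0 < p) (hp1 : p < 1) : 0 < Ip p := by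
  rw [Ip]
  rw [setIntegral_pos_iff_support_of_nonneg_ae]
  · have : (Ioi (0:ℝ)) ⊆ Function.support (fun t : ℝ => t ^ (p-1) / (1+t)) ∩ Ioi 0 := by
      intro t ht
      have ht0 : (0:ℝ) < t := ht
      refine ⟨?_, ht⟩
      have : 0 < t ^ (p-1) / (1+t) :=
        div_pos (Real.rpow_pos_of_pos ht0 _) (by linarith)
      exact fun h => by simp [h] at this
    calc (0:ℝ≥0∞) < volume (Ioi (0:ℝ)) := by simp
    _ ≤ _ := measure_mono this
  · filter_upwards [ae_restrict_mem measurableSet_Ioi] with t ht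
    have ht0 : (0:ℝ) < t := ht
    positivity
  · exact h_integrableOn hp hp1

lemma scalar_repr {p : ℝ} (hp : 0 < p) (hp1 : p < 1) {x : ℝ} (hx : 0 ≤ x) :
    ∫ t in Ioi (0:ℝ), t ^ (p-1) * (x / (x + t)) = Ip p * x ^ p := by
  rcases eq_or_lt_of_le hx with rfl | hx0
  · simp [Real.zero_rpow (ne_of_gt hp)]
  · set g : ℝ → ℝ := fun u => x ^ (p-1) * (u ^ (p-1) / (1+u)) with hg
    have key : ∀ t ∈ Ioi (0:ℝ), t ^ (p-1) * (x / (x + t)) = g (x⁻¹ * t) := by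
      intro t ht
      have ht0 : (0:ℝ) < t := ht
      have hxt : (0:ℝ) < x + t := by linarith
      have hxp : x ^ (p-1) ≠ 0 := (Real.rpow_pos_of_pos hx0 _).ne'
      have e1 : (x⁻¹*t) ^ (p-1) = (x ^ (p-1))⁻¹ * t ^ (p-1) := by
        rw [Real.mul_rpow (by positivity) ht0.le, Real.inv_rpow hx0.le]
      have e2 : 1 + x⁻¹*t = (x+t)/x := by field_simp
      rw [hg]
      simp only [e1, e2]
      field_simp
    have h1 : ∫ t in Ioi (0:ℝ), t ^ (p-1) * (x / (x + t))
        = ∫ t in Ioi (0:ℝ), g (x⁻¹ * t) := by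
      exact setIntegral_congr_fun measurableSet_Ioi key
    have h2 : ∫ t in Ioi (0:ℝ), g (x⁻¹ * t) = (x⁻¹)⁻¹ • ∫ u in Ioi (x⁻¹ * 0), g u :=
      integral_comp_mul_left_Ioi g 0 (by positivity)
    have h3 : ∫ u in Ioi (0:ℝ), g u = x ^ (p-1) * Ip p := by
      rw [hg, Ip, integral_const_mul]
    rw [h1, h2, mul_zero, h3, inv_inv, smul_eq_mul]
    rw [show x * (x ^ (p-1) * Ip p) = Ip p * (x ^ (p-1) * x ^ (1:ℝ)) by
      rw [Real.rpow_one]; ring]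
    rw [← Real.rpow_add hx0]
    norm_num



variable {E : Type*} [NormedAddCommGroup E] [InnerProductSpace ℝ E] [CompleteSpace E]
  [ContinuousFunctionalCalculus ℝ (E →L[ℝ] E) IsSelfAdjoint]

lemma spec_nonneg {T : E →L[ℝ] E} (hT : T.IsPositive) :
    ∀ x ∈ spectrum ℝ T, (0:ℝ) ≤ x := fun x hx =>
  (SpectrumRestricts.nnreal_iff.mp hT.spectrumRestricts) x hx

omit [ContinuousFunctionalCalculus ℝ (E →L[ℝ] E) IsSelfAdjoint] in
lemma spec_bound (T : E →L[ℝ] E) :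
    ∃ M : ℝ, 0 ≤ M ∧ ∀ x ∈ spectrum ℝ T, x ≤ M := by
  refine ⟨‖T‖ * ‖(1 : E →L[ℝ] E)‖, by positivity, fun x hx => ?_⟩
  have := spectrum.subset_closedBall_norm_mul T hx
  rw [Metric.mem_closedBall, Real.dist_eq, sub_zero] at this
  exact (le_abs_self x).trans this

/-- `cfc (x + t)` is `T + t•1`. -/
lemma cfc_add_const (T : E →L[ℝ] E) (hT : T.IsPositive) (t : ℝ) :
    cfc (fun x : ℝ => x + t) T = T + t • 1 := by
  rw [show (fun x : ℝ => x + t) = (fun x : ℝ => id x + (fun _ : ℝ => t) x) from rfl,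
    cfc_add (a := T) id (fun _ : ℝ => t) (by fun_prop) (by fun_prop),
    cfc_id ℝ T hT.isSelfAdjoint, cfc_const t T hT.isSelfAdjoint]
  simp [Algebra.algebraMap_eq_smul_one]

/-- The resolvent-type element. -/
noncomputable def res (T : E →L[ℝ] E) (t : ℝ) : E →L[ℝ] E :=
  cfc (fun x : ℝ => (x + t)⁻¹) T

lemma res_cont {T : E →L[ℝ] E} (hT : T.IsPositive) {t : ℝ} (ht : 0 < t) :
    ContinuousOn (fun x : ℝ => (x + t)⁻¹) (spectrum ℝ T) := by
  apply ContinuousOn.inv₀ (by fun_prop)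
  intro x hx
  have := spec_nonneg hT x hx
  positivity

lemma res_isPositive {T : E →L[ℝ] E} (hT : T.IsPositive) {t : ℝ} (ht : 0 < t) :
    (res T t).IsPositive := by
  letI : StarOrderedRing (E →L[ℝ] E) := ContinuousLinearMap.instStarOrderedRingRCLike
  rw [← ContinuousLinearMap.nonneg_iff_isPositive]
  refine cfc_nonneg fun x hx => ?_
  have := spec_nonneg hT x hx
  positivity

lemma res_mul_right {T : E →L[ℝ] E} (hT : T.IsPositive) {t : ℝ} (ht : 0 < t) :
    (T + t • 1) ∘L res T t = 1 := by
  have hspec := spec_nonneg hT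
  show (T + t • 1) * res T t = 1
  rw [res, ← cfc_add_const T hT t, ← cfc_mul _ _ T (by fun_prop) (res_cont hT ht)]
  have h : ∀ x ∈ spectrum ℝ T, (x + t) * (x + t)⁻¹ = 1 := by
    intro x hx
    have := hspec x hx
    field_simp
  rw [cfc_congr h, cfc_const_one ℝ T hT.isSelfAdjoint]

lemma res_mul_left {T : E →L[ℝ] E} (hT : T.IsPositive) {t : ℝ} (ht : 0 < t) :
    res T t ∘L (T + t • 1) = 1 := by
  have hspec := spec_nonneg hT
  show res T t * (T + t • 1) = 1
  rw [res, ← cfc_add_const T hT t, ← cfc_mul _ _ T (res_cont hT ht) (by fun_prop)]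
  have h : ∀ x ∈ spectrum ℝ T, (x + t)⁻¹ * (x + t) = 1 := by
    intro x hx
    have := hspec x hx
    field_simp
  rw [cfc_congr h, cfc_const_one ℝ T hT.isSelfAdjoint]

/-- `cfc (x/(x+t)) T = 1 - t • res T t`. -/
lemma cfc_ratio_eq {T : E →L[ℝ] E} (hT : T.IsPositive) {t : ℝ} (ht : 0 < t) :
    cfc (fun x : ℝ => x / (x + t)) T = 1 - t • res T t := by
  have hspec := spec_nonneg hT
  have h : ∀ x ∈ spectrum ℝ T, x / (x + t) = 1 - t * (x + t)⁻¹ := by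
    intro x hx
    have hx0 := hspec x hx
    have : x + t ≠ 0 := by positivity
    field_simp
    ring
  rw [cfc_congr h,
    cfc_sub (fun _ : ℝ => (1:ℝ)) (fun x : ℝ => t * (x + t)⁻¹) T (by fun_prop)
      (continuousOn_const.mul (res_cont hT ht)),
    cfc_const_one ℝ T hT.isSelfAdjoint]
  congr 1
  exact cfc_const_mul t _ T (res_cont hT ht)



variable {E : Type*} [NormedAddCommGroup E] [InnerProductSpace ℝ E] [CompleteSpace E]

/-- Cauchy–Schwarz for the semi-inner product induced by a positive operator. -/
lemma cs_isPositive {B : E →L[ℝ] E} (hB : B.IsPositive) (u w : E) :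
    ⟪B u, w⟫_ℝ * ⟪B u, w⟫_ℝ ≤ ⟪B u, u⟫_ℝ * ⟪B w, w⟫_ℝ := by
  have hBsa : adjoint B = B := hB.isSelfAdjoint
  have hsym : ∀ a b : E, ⟪B a, b⟫_ℝ = ⟪B b, a⟫_ℝ := by
    intro a b
    calc ⟪B a, b⟫_ℝ = ⟪a, B b⟫_ℝ := by
          conv_lhs => rw [← hBsa]
          exact adjoint_inner_left B b a
    _ = ⟪B b, a⟫_ℝ := real_inner_comm _ _
  have hq : ∀ t : ℝ, 0 ≤ ⟪B w, w⟫_ℝ * (t * t) + (2 * ⟪B u, w⟫_ℝ) * t + ⟪B u, u⟫_ℝ := by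
    intro t
    have h0 : (0:ℝ) ≤ ⟪B (u + t • w), u + t • w⟫_ℝ := by
      have := hB.inner_nonneg_left (u + t • w)
      simpa using this
    have hexp : ⟪B (u + t • w), u + t • w⟫_ℝ
        = ⟪B w, w⟫_ℝ * (t * t) + (2 * ⟪B u, w⟫_ℝ) * t + ⟪B u, u⟫_ℝ := by
      rw [B.map_add, B.map_smul, inner_add_left, inner_add_right, inner_add_right,
        real_inner_smul_left, real_inner_smul_right, real_inner_smul_left,
        real_inner_smul_right, hsym w u]
      ring
    linarith [hexp ▸ h0]
  have := discrim_le_zero hq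
  rw [discrim] at this
  nlinarith


omit [CompleteSpace E] in
lemma isSelfAdjoint_inner_symm' {B : E →L[ℝ] E} [CompleteSpace E] (hB : IsSelfAdjoint B)
    (a b : E) : ⟪B a, b⟫_ℝ = ⟪a, B b⟫_ℝ := by
  have hBsa : adjoint B = B := hB
  conv_lhs => rw [← hBsa]
  exact adjoint_inner_left B b a

lemma isPositive_inner_nonneg {B : E →L[ℝ] E} (hB : B.IsPositive) (x : E) :
    0 ≤ ⟪B x, x⟫_ℝ := by simpa using hB.inner_nonneg_left x


section Rep

variable {E : Type*} [NormedAddCommGroup E] [InnerProductSpace ℝ E] [CompleteSpace E]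
  [ContinuousFunctionalCalculus ℝ (E →L[ℝ] E) IsSelfAdjoint]

attribute [local instance] Measure.Subtype.measureSpace

lemma ratio_cont {T : E →L[ℝ] E} (hT : T.IsPositive) {t : ℝ} (ht : 0 < t) :
    ContinuousOn (fun x : ℝ => x / (x + t)) (spectrum ℝ T) := by
  apply ContinuousOn.div (by fun_prop) (by fun_prop)
  intro x hx
  have := spec_nonneg hT x hx
  positivity

lemma uncurry_cont {T : E →L[ℝ] E} (hT : T.IsPositive) {p : ℝ} :
    Continuous (fun q : (↥(Ioi (0:ℝ))) × (↥(spectrum ℝ T)) =>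
      ((q.1 : ℝ)) ^ (p-1) * ((q.2 : ℝ) / ((q.2 : ℝ) + (q.1 : ℝ)))) := by
  have c1 : Continuous (fun q : (↥(Ioi (0:ℝ))) × (↥(spectrum ℝ T)) => ((q.1 : ℝ)) ^ (p-1)) := by
    rw [continuous_iff_continuousAt]
    intro q
    exact (Real.continuousAt_rpow_const _ _ (Or.inl q.1.2.ne')).comp
      (continuous_subtype_val.comp continuous_fst).continuousAt
  have c2 : Continuous (fun q : (↥(Ioi (0:ℝ))) × (↥(spectrum ℝ T)) =>
      (q.2 : ℝ) / ((q.2 : ℝ) + (q.1 : ℝ))) := by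
    apply Continuous.div (by fun_prop) (by fun_prop)
    intro q
    have h1 : (0:ℝ) ≤ (q.2 : ℝ) := spec_nonneg hT _ q.2.2
    have h2 : (0:ℝ) < (q.1 : ℝ) := q.1.2
    positivity
  exact c1.mul c2

set_option maxHeartbeats 1000000 in
lemma rep {T : E →L[ℝ] E} (hT : T.IsPositive) {p : ℝ} (hp : 0 < p) (hp1 : p < 1) :
    Integrable (fun t : ↥(Ioi (0:ℝ)) =>
        cfc (fun x : ℝ => ((t:ℝ)) ^ (p-1) * (x / (x + (t:ℝ)))) T) (volume) ∧
      Ip p • cfc (fun x : ℝ => x ^ p) T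
        = ∫ t : ↥(Ioi (0:ℝ)), cfc (fun x : ℝ => ((t:ℝ)) ^ (p-1) * (x / (x + (t:ℝ)))) T := by
  obtain ⟨M, hM0, hM⟩ := spec_bound T
  have hspec := spec_nonneg hT
  have hf₁ : ∀ t : ↥(Ioi (0:ℝ)),
      ContinuousOn (fun x : ℝ => ((t:ℝ)) ^ (p-1) * (x / (x + (t:ℝ)))) (spectrum ℝ T) :=
    fun t => continuousOn_const.mul (ratio_cont hT t.2)
  have hunc : Continuous (fun t : ↥(Ioi (0:ℝ)) =>
      (spectrum ℝ T).restrict (fun x : ℝ => ((t:ℝ)) ^ (p-1) * (x / (x + (t:ℝ))))).uncurry :=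
    uncurry_cont hT
  have hbound : ∀ t : ↥(Ioi (0:ℝ)), ∀ x ∈ spectrum ℝ T,
      ‖((t:ℝ)) ^ (p-1) * (x / (x + (t:ℝ)))‖
        ≤ ‖min ((t:ℝ) ^ (p-1)) (M * (t:ℝ) ^ (p-2))‖ := by
    intro t x hx
    have h1 : 0 ≤ ((t:ℝ)) ^ (p-1) * (x / (x + (t:ℝ))) :=
      integrand_nonneg_aux t.2.le (hspec x hx)
    rw [Real.norm_eq_abs, abs_of_nonneg h1]
    exact (integrand_le_aux t.2 (hspec x hx) (hM x hx)).trans (le_abs_self _)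
  have hbd : Integrable (fun t : ↥(Ioi (0:ℝ)) => min ((t:ℝ) ^ (p-1)) (M * (t:ℝ) ^ (p-2)))
      (volume : Measure ↥(Ioi (0:ℝ))) := by
    have h1 : Integrable (fun u : ℝ => min (u ^ (p-1)) (M * u ^ (p-2)))
        (volume.restrict (Ioi 0)) := integrableOn_aux hp hp1 hM0
    rw [← map_comap_subtype_coe measurableSet_Ioi] at h1
    exact ((MeasurableEmbedding.subtype_coe measurableSet_Ioi).integrable_map_iff).1 h1
  have hcont : ContinuousOn (Function.uncurry (fun t : ↥(Ioi (0:ℝ)) => fun x : ℝ =>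
      ((t:ℝ)) ^ (p-1) * (x / (x + (t:ℝ))))) (univ ×ˢ spectrum ℝ T) := by
    rw [continuousOn_iff_continuous_restrict]
    exact hunc.comp (f := fun q : ↥(univ ×ˢ spectrum ℝ T) =>
      (q.1.1, (⟨q.1.2, q.2.2⟩ : spectrum ℝ T)))
      ((continuous_subtype_val.fst).prodMk (continuous_subtype_val.snd.subtype_mk _))
  -- the cfc/integral exchange
  have key := cfc_integral (𝕜 := ℝ)
    (fun t : ↥(Ioi (0:ℝ)) => fun x : ℝ => ((t:ℝ)) ^ (p-1) * (x / (x + (t:ℝ))))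
    (fun t : ↥(Ioi (0:ℝ)) => ‖min ((t:ℝ) ^ (p-1)) (M * (t:ℝ) ^ (p-2))‖)
    T hcont (Filter.Eventually.of_forall hbound) hbd.2.norm hT.isSelfAdjoint
  -- rewrite LHS of key
  have hrp : ContinuousOn (fun x : ℝ => x ^ p) (spectrum ℝ T) :=
    ContinuousOn.rpow_const continuousOn_id (fun x _ => Or.inr hp.le)
  have h1 : ∀ r ∈ spectrum ℝ T,
      (∫ t : ↥(Ioi (0:ℝ)), ((t:ℝ)) ^ (p-1) * (r / (r + (t:ℝ)))) = Ip p * r ^ p := by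
    intro r hr
    have h0 : (∫ t : ↥(Ioi (0:ℝ)), ((t:ℝ)) ^ (p-1) * (r / (r + (t:ℝ))))
        = ∫ u in Ioi (0:ℝ), u ^ (p-1) * (r / (r + u)) :=
      integral_subtype measurableSet_Ioi (fun u : ℝ => u ^ (p-1) * (r / (r + u)))
    rw [h0]
    exact scalar_repr hp hp1 (hspec r hr)
  have h2 : cfc (fun r : ℝ => ∫ t : ↥(Ioi (0:ℝ)), ((t:ℝ)) ^ (p-1) * (r / (r + (t:ℝ)))) T
      = Ip p • cfc (fun x : ℝ => x ^ p) T := by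
    rw [cfc_congr h1]
    exact cfc_const_mul (Ip p) _ T hrp
  -- integrability of the operator-valued integrand
  haveI : CompactSpace (spectrum ℝ T) := spectrum.instCompactSpace T
  have hfc_cont : Continuous (fun t : ↥(Ioi (0:ℝ)) =>
      (⟨_, (hf₁ t).restrict⟩ : C(spectrum ℝ T, ℝ))) :=
    ContinuousMap.curry ⟨_, hunc⟩ |>.continuous
  have hfc_int : Integrable (fun t : ↥(Ioi (0:ℝ)) =>
      (⟨_, (hf₁ t).restrict⟩ : C(spectrum ℝ T, ℝ))) (volume : Measure ↥(Ioi (0:ℝ))) := by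
    refine ⟨hfc_cont.aestronglyMeasurable, ?_⟩
    refine hbd.2.mono <| .of_forall fun t => ?_
    rw [ContinuousMap.norm_le _ (norm_nonneg _)]
    exact fun z => hbound t z.1 z.2
  have happ : (fun t : ↥(Ioi (0:ℝ)) =>
        cfc (fun x : ℝ => ((t:ℝ)) ^ (p-1) * (x / (x + (t:ℝ)))) T)
      = fun t : ↥(Ioi (0:ℝ)) => cfcL (a := T) hT.isSelfAdjoint
          (⟨_, (hf₁ t).restrict⟩ : C(spectrum ℝ T, ℝ)) := by
    funext t
    exact cfc_apply _ T hT.isSelfAdjoint (hf₁ t)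
  have hint : Integrable (fun t : ↥(Ioi (0:ℝ)) =>
      cfc (fun x : ℝ => ((t:ℝ)) ^ (p-1) * (x / (x + (t:ℝ)))) T) (volume) := by
    rw [happ]
    exact (cfcL (a := T) hT.isSelfAdjoint).integrable_comp hfc_int
  exact ⟨hint, by rw [← h2, key]⟩

end Rep

section TwoSpace

variable {H K : Type*}
  [NormedAddCommGroup H] [InnerProductSpace ℝ H] [CompleteSpace H]
  [NormedAddCommGroup K] [InnerProductSpace ℝ K] [CompleteSpace K]
  [ContinuousFunctionalCalculus ℝ (H →L[ℝ] H) IsSelfAdjoint]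
  [ContinuousFunctionalCalculus ℝ (K →L[ℝ] K) IsSelfAdjoint]

variable {A : H →L[ℝ] H} {V : K →L[ℝ] H}

lemma smul_one_isPositive {t : ℝ} (ht : 0 ≤ t) : (t • (1 : H →L[ℝ] H)).IsPositive := by
  constructor
  · exact (isPositive_one.smul_of_nonneg ht).1
  · intro x
    rw [reApplyInnerSelf, smul_apply, one_apply_eq_self, real_inner_smul_left]
    simpa using mul_nonneg ht real_inner_self_nonneg

lemma conj_shift (hV : adjoint V ∘L V = 1) (t : ℝ) :
    adjoint V ∘L (A + t • 1) ∘L V = (adjoint V ∘L A ∘L V) + t • 1 := by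
  rw [add_comp, comp_add, smul_comp, comp_smul, ContinuousLinearMap.one_def,
    ContinuousLinearMap.id_comp, hV]

/-- Key inequality: `⟪res (V*AV) t x, x⟫ ≤ ⟪res A t (V x), V x⟫`. -/
lemma res_comparison (hA : A.IsPositive) (hV : adjoint V ∘L V = 1)
    {t : ℝ} (ht : 0 < t) (x : K) :
    ⟪res (adjoint V ∘L A ∘L V) t x, x⟫_ℝ ≤ ⟪res A t (V x), V x⟫_ℝ := by
  set C : K →L[ℝ] K := adjoint V ∘L A ∘L V with hCdef
  have hC : C.IsPositive := hA.adjoint_conj V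
  set B : H →L[ℝ] H := A + t • 1 with hBdef
  have hB : B.IsPositive := hA.add (smul_one_isPositive ht.le)
  set y : K := res C t x with hy
  set w : H := res A t (V x) with hw
  set a : ℝ := ⟪res C t x, x⟫_ℝ with hadef
  set b : ℝ := ⟪res A t (V x), V x⟫_ℝ with hbdef
  have ha0 : 0 ≤ a := isPositive_inner_nonneg (res_isPositive hC ht) x
  have hb0 : 0 ≤ b := isPositive_inner_nonneg (res_isPositive hA ht) (V x)
  have hax : a = ⟪y, x⟫_ℝ := rfl
  -- claim 1
  have hc1 : ⟪B (V y), V y⟫_ℝ = a := by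
    have h1 : ⟪B (V y), V y⟫_ℝ = ⟪adjoint V (B (V y)), y⟫_ℝ :=
      (adjoint_inner_left V y (B (V y))).symm
    have h2 : adjoint V (B (V y)) = x := by
      have h' : adjoint V (B (V y)) = ((adjoint V ∘L B ∘L V) ∘L res C t) x := rfl
      rw [h', conj_shift hV, ← hCdef, res_mul_right hC ht, one_apply_eq_self]
    rw [h1, h2, hax, real_inner_comm]
  -- claim 2
  have hc2 : ⟪B (V y), w⟫_ℝ = a := by
    have h1 : ⟪B (V y), w⟫_ℝ = ⟪V y, B w⟫_ℝ := isSelfAdjoint_inner_symm' hB.isSelfAdjoint _ _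
    have h2 : B w = V x := by
      have : B w = ((B ∘L res A t)) (V x) := rfl
      rw [this, res_mul_right hA ht, one_apply_eq_self]
    have h3 : ⟪V y, V x⟫_ℝ = ⟪y, x⟫_ℝ := by
      rw [← adjoint_inner_left V x (V y)]
      have h' : adjoint V (V y) = (adjoint V ∘L V) y := rfl
      rw [h', hV, one_apply_eq_self]
    rw [h1, h2, h3, hax]
  -- claim 3
  have hc3 : ⟪B w, w⟫_ℝ = b := by
    have h1 : ⟪B w, w⟫_ℝ = ⟪w, B w⟫_ℝ := real_inner_comm _ _
    have h2 : B w = V x := by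
      have : B w = ((B ∘L res A t)) (V x) := rfl
      rw [this, res_mul_right hA ht, one_apply_eq_self]
    rw [h1, h2, hbdef, hw, real_inner_comm]
  -- Cauchy–Schwarz
  have hcs := cs_isPositive hB (V y) w
  rw [hc1, hc2, hc3] at hcs
  rcases eq_or_lt_of_le ha0 with h | h
  · rw [← h]; exact hb0
  · nlinarith


attribute [local instance] Measure.Subtype.measureSpace

/-- comparison for the ratio function. -/
lemma ratio_inner_comparison (hA : A.IsPositive) (hV : adjoint V ∘L V = 1)
    {t : ℝ} (ht : 0 < t) (x : K) :
    ⟪cfc (fun u : ℝ => u / (u + t)) A (V x), V x⟫_ℝ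
      ≤ ⟪cfc (fun u : ℝ => u / (u + t)) (adjoint V ∘L A ∘L V) x, x⟫_ℝ := by
  have hC : (adjoint V ∘L A ∘L V).IsPositive := hA.adjoint_conj V
  rw [cfc_ratio_eq hA ht, cfc_ratio_eq hC ht]
  have hVx : ⟪V x, V x⟫_ℝ = ⟪x, x⟫_ℝ := by
    rw [← adjoint_inner_left V x (V x)]
    have h' : adjoint V (V x) = (adjoint V ∘L V) x := rfl
    rw [h', hV, one_apply_eq_self]
  have hres := res_comparison hA hV ht x
  simp only [sub_apply, smul_apply, one_apply_eq_self, inner_sub_left, real_inner_smul_left]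
  rw [hVx]
  have := mul_le_mul_of_nonneg_left hres ht.le
  linarith

/-- scaled comparison. -/
lemma scaled_inner_comparison (hA : A.IsPositive) (hV : adjoint V ∘L V = 1)
    {p t : ℝ} (ht : 0 < t) (x : K) :
    ⟪cfc (fun u : ℝ => t ^ (p-1) * (u / (u + t))) A (V x), V x⟫_ℝ
      ≤ ⟪cfc (fun u : ℝ => t ^ (p-1) * (u / (u + t))) (adjoint V ∘L A ∘L V) x, x⟫_ℝ := by
  have hC : (adjoint V ∘L A ∘L V).IsPositive := hA.adjoint_conj V
  rw [cfc_const_mul (t ^ (p-1)) _ A (ratio_cont hA ht),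
    cfc_const_mul (t ^ (p-1)) _ (adjoint V ∘L A ∘L V) (ratio_cont hC ht)]
  simp only [smul_apply, real_inner_smul_left]
  exact mul_le_mul_of_nonneg_left (ratio_inner_comparison hA hV ht x)
    (Real.rpow_nonneg ht.le _)

set_option maxHeartbeats 1000000 in
/-- Hansen-type inequality at the level of quadratic forms. -/
lemma hansen_inner (hA : A.IsPositive) (hV : adjoint V ∘L V = 1)
    {p : ℝ} (hp0 : 0 ≤ p) (hp1 : p ≤ 1) (x : K) :
    ⟪cfc (fun u : ℝ => u ^ p) A (V x), V x⟫_ℝ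
      ≤ ⟪cfc (fun u : ℝ => u ^ p) (adjoint V ∘L A ∘L V) x, x⟫_ℝ := by
  have hC : (adjoint V ∘L A ∘L V).IsPositive := hA.adjoint_conj V
  have hVx : ⟪V x, V x⟫_ℝ = ⟪x, x⟫_ℝ := by
    rw [← adjoint_inner_left V x (V x)]
    have h' : adjoint V (V x) = (adjoint V ∘L V) x := rfl
    rw [h', hV, one_apply_eq_self]
  rcases eq_or_lt_of_le hp0 with rfl | hp
  · have h0 : ∀ T : H →L[ℝ] H, T.IsPositive → cfc (fun u : ℝ => u ^ (0:ℝ)) T = 1 := by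
      intro T hT
      rw [show (fun u : ℝ => u ^ (0:ℝ)) = (fun _ : ℝ => (1:ℝ)) by
        funext u; exact Real.rpow_zero u]
      exact cfc_const_one ℝ T hT.isSelfAdjoint
    have h0' : cfc (fun u : ℝ => u ^ (0:ℝ)) (adjoint V ∘L A ∘L V) = 1 := by
      rw [show (fun u : ℝ => u ^ (0:ℝ)) = (fun _ : ℝ => (1:ℝ)) by
        funext u; exact Real.rpow_zero u]
      exact cfc_const_one ℝ _ hC.isSelfAdjoint
    rw [h0 A hA, h0', one_apply_eq_self, one_apply_eq_self, hVx]
  rcases eq_or_lt_of_le hp1 with rfl | hp1'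
  · have hfun : (fun u : ℝ => u ^ (1:ℝ)) = (id : ℝ → ℝ) := by
      funext u; exact Real.rpow_one u
    have h1A : cfc (fun u : ℝ => u ^ (1:ℝ)) A = A := by
      rw [hfun]; exact cfc_id ℝ A hA.isSelfAdjoint
    have h1C : cfc (fun u : ℝ => u ^ (1:ℝ)) (adjoint V ∘L A ∘L V) = adjoint V ∘L A ∘L V := by
      rw [hfun]; exact cfc_id ℝ _ hC.isSelfAdjoint
    rw [h1A, h1C, ← adjoint_inner_left V x (A (V x))]
    exact le_refl _
  -- main case 0 < p < 1
  obtain ⟨hintA, hrepA⟩ := rep hA hp hp1'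
  obtain ⟨hintC, hrepC⟩ := rep hC hp hp1'
  set v : H := V x with hv
  set LH : (H →L[ℝ] H) →L[ℝ] ℝ :=
    (innerSL ℝ v).comp ((ContinuousLinearMap.apply ℝ H v)) with hLH
  set LK : (K →L[ℝ] K) →L[ℝ] ℝ :=
    (innerSL ℝ x).comp ((ContinuousLinearMap.apply ℝ K x)) with hLK
  have hLHa : ∀ T : H →L[ℝ] H, LH T = ⟪T v, v⟫_ℝ := fun T => real_inner_comm _ _
  have hLKa : ∀ T : K →L[ℝ] K, LK T = ⟪T x, x⟫_ℝ := fun T => real_inner_comm _ _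
  have hA' : Ip p * ⟪cfc (fun u : ℝ => u ^ p) A v, v⟫_ℝ
      = ∫ t : ↥(Ioi (0:ℝ)), ⟪cfc (fun u : ℝ => ((t:ℝ)) ^ (p-1) * (u / (u + (t:ℝ)))) A v, v⟫_ℝ := by
    calc Ip p * ⟪cfc (fun u : ℝ => u ^ p) A v, v⟫_ℝ
        = LH (Ip p • cfc (fun u : ℝ => u ^ p) A) := by
          rw [hLHa, smul_apply, real_inner_smul_left]
    _ = LH (∫ t : ↥(Ioi (0:ℝ)), cfc (fun u : ℝ => ((t:ℝ)) ^ (p-1) * (u / (u + (t:ℝ)))) A) := by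
          rw [hrepA]
    _ = ∫ t : ↥(Ioi (0:ℝ)), LH (cfc (fun u : ℝ => ((t:ℝ)) ^ (p-1) * (u / (u + (t:ℝ)))) A) :=
          (LH.integral_comp_comm hintA).symm
    _ = _ := by simp only [hLHa]
  have hC' : Ip p * ⟪cfc (fun u : ℝ => u ^ p) (adjoint V ∘L A ∘L V) x, x⟫_ℝ
      = ∫ t : ↥(Ioi (0:ℝ)),
          ⟪cfc (fun u : ℝ => ((t:ℝ)) ^ (p-1) * (u / (u + (t:ℝ)))) (adjoint V ∘L A ∘L V) x, x⟫_ℝ := by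
    calc Ip p * ⟪cfc (fun u : ℝ => u ^ p) (adjoint V ∘L A ∘L V) x, x⟫_ℝ
        = LK (Ip p • cfc (fun u : ℝ => u ^ p) (adjoint V ∘L A ∘L V)) := by
          rw [hLKa, smul_apply, real_inner_smul_left]
    _ = LK (∫ t : ↥(Ioi (0:ℝ)),
          cfc (fun u : ℝ => ((t:ℝ)) ^ (p-1) * (u / (u + (t:ℝ)))) (adjoint V ∘L A ∘L V)) := by
          rw [hrepC]
    _ = ∫ t : ↥(Ioi (0:ℝ)),
          LK (cfc (fun u : ℝ => ((t:ℝ)) ^ (p-1) * (u / (u + (t:ℝ)))) (adjoint V ∘L A ∘L V)) :=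
          (LK.integral_comp_comm hintC).symm
    _ = _ := by simp only [hLKa]
  have hmono : (∫ t : ↥(Ioi (0:ℝ)),
        ⟪cfc (fun u : ℝ => ((t:ℝ)) ^ (p-1) * (u / (u + (t:ℝ)))) A v, v⟫_ℝ)
      ≤ ∫ t : ↥(Ioi (0:ℝ)),
        ⟪cfc (fun u : ℝ => ((t:ℝ)) ^ (p-1) * (u / (u + (t:ℝ)))) (adjoint V ∘L A ∘L V) x, x⟫_ℝ := by
    refine integral_mono ?_ ?_ ?_
    · have := LH.integrable_comp hintA
      simpa only [hLHa] using this
    · have := LK.integrable_comp hintC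
      simpa only [hLKa] using this
    · intro t
      exact scaled_inner_comparison hA hV (p := p) t.2 x
  have hIp := Ip_pos hp hp1'
  have := (hA'.trans_le hmono).trans_eq hC'.symm
  exact le_of_mul_le_mul_left this hIp



lemma opow_sq_inner {T : H →L[ℝ] H} (hT : T.IsPositive) {r : ℝ} (hr0 : 0 ≤ r) (z : H) :
    ‖cfc (fun u : ℝ => u ^ r) T z‖ ^ 2 = ⟪cfc (fun u : ℝ => u ^ (r+r)) T z, z⟫_ℝ := by
  have hcont : ContinuousOn (fun u : ℝ => u ^ r) (spectrum ℝ T) :=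
    ContinuousOn.rpow_const continuousOn_id (fun x _ => Or.inr hr0)
  have hsq : cfc (fun u : ℝ => u ^ r) T * cfc (fun u : ℝ => u ^ r) T
      = cfc (fun u : ℝ => u ^ (r+r)) T := by
    rw [← cfc_mul _ _ T hcont hcont]
    apply cfc_congr
    intro u hu
    have hu0 := spec_nonneg hT u hu
    rcases eq_or_lt_of_le hr0 with rfl | hr'
    · simp
    · exact (Real.rpow_add' hu0 (by positivity)).symm
  have h1 : ⟪cfc (fun u : ℝ => u ^ r) T z, cfc (fun u : ℝ => u ^ r) T z⟫_ℝ
      = ⟪z, cfc (fun u : ℝ => u ^ (r+r)) T z⟫_ℝ := by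
    rw [isSelfAdjoint_inner_symm' (cfc_predicate _ T) z (cfc (fun u : ℝ => u ^ r) T z)]
    congr 1
    calc cfc (fun u : ℝ => u ^ r) T (cfc (fun u : ℝ => u ^ r) T z)
        = (cfc (fun u : ℝ => u ^ r) T * cfc (fun u : ℝ => u ^ r) T) z := rfl
    _ = cfc (fun u : ℝ => u ^ (r+r)) T z := by rw [hsq]
  rw [← real_inner_self_eq_norm_sq, h1, real_inner_comm]

lemma step (hA : A.IsPositive) (hV : adjoint V ∘L V = 1)
    {r : ℝ} (hr0 : 0 ≤ r) (hr : r ≤ 1/2) (y : K) :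
    ‖cfc (fun u : ℝ => u ^ r) A (V y)‖
      ≤ ‖cfc (fun u : ℝ => u ^ r) (adjoint V ∘L A ∘L V) y‖ := by
  have hC : (adjoint V ∘L A ∘L V).IsPositive := hA.adjoint_conj V
  have eA := opow_sq_inner hA hr0 (V y)
  have eC := opow_sq_inner hC hr0 y
  have h2 := hansen_inner hA hV (p := r + r) (by linarith) (by linarith) y
  nlinarith [norm_nonneg (cfc (fun u : ℝ => u ^ r) A (V y)),
    norm_nonneg (cfc (fun u : ℝ => u ^ r) (adjoint V ∘L A ∘L V) y)]


end TwoSpace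

end Stmt3Aux

open ContinuousLinearMap

set_option maxHeartbeats 2000000 in
/-- the operator inequality (Rudi et al., Proposition 6). -/
theorem stmt3
    {H K : Type*}
    [NormedAddCommGroup H] [InnerProductSpace ℝ H] [CompleteSpace H]
    [TopologicalSpace.SeparableSpace H]
    [NormedAddCommGroup K] [InnerProductSpace ℝ K] [CompleteSpace K]
    [TopologicalSpace.SeparableSpace K]
    [ContinuousFunctionalCalculus ℝ (H →L[ℝ] H) IsSelfAdjoint]
    [ContinuousFunctionalCalculus ℝ (K →L[ℝ] K) IsSelfAdjoint]
    (A : H →L[ℝ] H) (hA : A.IsPositive)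
    (V : K →L[ℝ] H) (hV : adjoint V ∘L V = 1)
    (B : K →L[ℝ] K)
    (r s : ℝ) (hr0 : 0 ≤ r) (hr : r ≤ 1 / 2) (hs0 : 0 ≤ s) (hs : s ≤ 1 / 2) :
    ‖opow A r ∘L V ∘L B ∘L adjoint V ∘L opow A s‖ ≤
      ‖opow (adjoint V ∘L A ∘L V) r ∘L B ∘L opow (adjoint V ∘L A ∘L V) s‖ := by
  have hC : (adjoint V ∘L A ∘L V).IsPositive := hA.adjoint_conj V
  have hsaAs : adjoint (opow A s) = opow A s := by
    rw [← ContinuousLinearMap.star_eq_adjoint]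
    exact (cfc_predicate _ A : IsSelfAdjoint (opow A s)).star_eq
  have hsaCr : adjoint (opow (adjoint V ∘L A ∘L V) r) = opow (adjoint V ∘L A ∘L V) r := by
    rw [← ContinuousLinearMap.star_eq_adjoint]
    exact (cfc_predicate _ _ : IsSelfAdjoint (opow (adjoint V ∘L A ∘L V) r)).star_eq
  have hsaCs : adjoint (opow (adjoint V ∘L A ∘L V) s) = opow (adjoint V ∘L A ∘L V) s := by
    rw [← ContinuousLinearMap.star_eq_adjoint]
    exact (cfc_predicate _ _ : IsSelfAdjoint (opow (adjoint V ∘L A ∘L V) s)).star_eq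
  -- step 1
  have h1 : ‖opow A r ∘L V ∘L B ∘L adjoint V ∘L opow A s‖
      ≤ ‖opow (adjoint V ∘L A ∘L V) r ∘L B ∘L adjoint V ∘L opow A s‖ := by
    refine opNorm_le_bound _ (norm_nonneg _) fun w => ?_
    calc ‖(opow A r ∘L V ∘L B ∘L adjoint V ∘L opow A s) w‖
        = ‖cfc (fun u : ℝ => u ^ r) A (V ((B ∘L adjoint V ∘L opow A s) w))‖ := rfl
      _ ≤ ‖cfc (fun u : ℝ => u ^ r) (adjoint V ∘L A ∘L V) ((B ∘L adjoint V ∘L opow A s) w)‖ :=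
          Stmt3Aux.step hA hV hr0 hr _
      _ = ‖(opow (adjoint V ∘L A ∘L V) r ∘L B ∘L adjoint V ∘L opow A s) w‖ := rfl
      _ ≤ _ := le_opNorm _ _
  -- step 2 : pass to the adjoint
  set X := opow (adjoint V ∘L A ∘L V) r ∘L B ∘L adjoint V ∘L opow A s with hX
  have hXadj : ∀ w, adjoint X w
      = opow A s (V (adjoint B (opow (adjoint V ∘L A ∘L V) r w))) := by
    intro w
    rw [hX]
    simp only [adjoint_comp, adjoint_adjoint, hsaAs, hsaCr, comp_apply]
  have h2 : ‖adjoint X‖ ≤ ‖opow (adjoint V ∘L A ∘L V) s ∘L adjoint B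
      ∘L opow (adjoint V ∘L A ∘L V) r‖ := by
    refine opNorm_le_bound _ (norm_nonneg _) fun w => ?_
    calc ‖adjoint X w‖
        = ‖cfc (fun u : ℝ => u ^ s) A (V (adjoint B (opow (adjoint V ∘L A ∘L V) r w)))‖ := by
          rw [hXadj]; rfl
      _ ≤ ‖cfc (fun u : ℝ => u ^ s) (adjoint V ∘L A ∘L V)
            (adjoint B (opow (adjoint V ∘L A ∘L V) r w))‖ := Stmt3Aux.step hA hV hs0 hs _
      _ = ‖(opow (adjoint V ∘L A ∘L V) s ∘L adjoint B ∘L opow (adjoint V ∘L A ∘L V) r) w‖ := rfl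
      _ ≤ _ := le_opNorm _ _
  -- step 3: adjoint back
  have h3 : adjoint (opow (adjoint V ∘L A ∘L V) s ∘L adjoint B ∘L opow (adjoint V ∘L A ∘L V) r)
      = opow (adjoint V ∘L A ∘L V) r ∘L B ∘L opow (adjoint V ∘L A ∘L V) s := by
    ext w
    simp only [adjoint_comp, adjoint_adjoint, hsaCs, hsaCr, comp_apply]
  calc ‖opow A r ∘L V ∘L B ∘L adjoint V ∘L opow A s‖
      ≤ ‖X‖ := h1
    _ = ‖adjoint X‖ := (ContinuousLinearMap.adjoint.norm_map X).symm
    _ ≤ ‖opow (adjoint V ∘L A ∘L V) s ∘L adjoint B ∘L opow (adjoint V ∘L A ∘L V) r‖ := h2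
    _ = ‖adjoint (opow (adjoint V ∘L A ∘L V) s ∘L adjoint B
          ∘L opow (adjoint V ∘L A ∘L V) r)‖ :=
        (ContinuousLinearMap.adjoint.norm_map _).symm
    _ = _ := by rw [h3]
end

section
/- Let H be a real separable Hilbert space, let T and S be positive bounded linear operators on H, and let λ > 0. If ‖(T + λI)^{-1/2}(T − S)(T + λI)^{-1/2}‖ ≤ 1/4, then ‖(T + λI)^{-1/2}(S + λI)^{1/2}‖ ≤ √6/2. -/
open ContinuousLinearMap

section Aux

variable {H : Type*} [NormedAddCommGroup H] [InnerProductSpace ℝ H] [CompleteSpace H]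
    [ContinuousFunctionalCalculus ℝ (H →L[ℝ] H) IsSelfAdjoint]

lemma aux_smul_one_pos (lam : ℝ) (hlam : 0 ≤ lam) : (lam • 1 : H →L[ℝ] H).IsPositive := by
  refine ⟨ContinuousLinearMap.isSelfAdjoint_iff_isSymmetric.mp (IsSelfAdjoint.smul (star_trivial lam) (IsSelfAdjoint.one _)), fun x => ?_⟩
  simp only [reApplyInnerSelf, smul_apply, one_apply, real_inner_smul_left, RCLike.re_to_real]
  exact mul_nonneg hlam real_inner_self_nonneg

lemma aux_spectrum_subset (T : H →L[ℝ] H) (hT : T.IsPositive) (lam : ℝ) :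
    spectrum ℝ (T + lam • 1) ⊆ Set.Ici lam := by
  intro x hx
  rw [← Algebra.algebraMap_eq_smul_one, ← spectrum.add_singleton_eq] at hx
  obtain ⟨t, ht, r, hr, rfl⟩ := Set.mem_add.mp hx
  have h0 : 0 ≤ t := by
    have h := hT.spectrumRestricts
    rw [SpectrumRestricts.nnreal_iff] at h
    exact h t ht
  simp only [Set.mem_singleton_iff] at hr
  subst hr
  simpa using h0

lemma aux_BPB (P : H →L[ℝ] H) (hP : IsSelfAdjoint P) (lam : ℝ) (hlam : 0 < lam)
    (hs : spectrum ℝ P ⊆ Set.Ici lam) :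
    opow P (-(1/2)) * P * opow P (-(1/2)) = 1 := by
  have hpos : ∀ x ∈ spectrum ℝ P, (0:ℝ) < x := fun x hx => lt_of_lt_of_le hlam (hs hx)
  have hf : ContinuousOn (fun x : ℝ => x ^ (-(1/2) : ℝ)) (spectrum ℝ P) := fun x hx =>
    (Real.continuousAt_rpow_const x _ (Or.inl (hpos x hx).ne')).continuousWithinAt
  have hid : ContinuousOn (fun x : ℝ => x) (spectrum ℝ P) := continuousOn_id
  show cfc (fun x : ℝ => x ^ (-(1/2) : ℝ)) P * P * cfc (fun x : ℝ => x ^ (-(1/2) : ℝ)) P = 1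
  calc cfc (fun x : ℝ => x ^ (-(1/2) : ℝ)) P * P * cfc (fun x : ℝ => x ^ (-(1/2) : ℝ)) P
      = cfc (fun x : ℝ => x ^ (-(1/2) : ℝ)) P * cfc (fun x : ℝ => x) P *
        cfc (fun x : ℝ => x ^ (-(1/2) : ℝ)) P := by rw [cfc_id' ℝ P hP]
    _ = cfc (fun x : ℝ => (x ^ (-(1/2) : ℝ) * x) * x ^ (-(1/2) : ℝ)) P := by
        rw [← cfc_mul _ _ P hf hid, ← cfc_mul (fun x : ℝ => x ^ (-(1/2) : ℝ) * x) _ P (hf.mul hid) hf]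
    _ = cfc (fun _ : ℝ => (1:ℝ)) P := by
        apply cfc_congr
        intro x hx
        have hx0 := hpos x hx
        dsimp only
        have h1 : x ^ (-(1/2) : ℝ) * x = x ^ ((1/2) : ℝ) := by
          nth_rewrite 2 [← Real.rpow_one x]
          rw [← Real.rpow_add hx0]
          norm_num
        rw [h1, ← Real.rpow_add hx0]
        norm_num
    _ = 1 := cfc_const_one ℝ P

lemma aux_AA (Q : H →L[ℝ] H) (hQ : IsSelfAdjoint Q) (lam : ℝ) (hlam : 0 < lam)
    (hs : spectrum ℝ Q ⊆ Set.Ici lam) :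
    opow Q (1/2) * opow Q (1/2) = Q := by
  have hpos : ∀ x ∈ spectrum ℝ Q, (0:ℝ) < x := fun x hx => lt_of_lt_of_le hlam (hs hx)
  have hg : ContinuousOn (fun x : ℝ => x ^ ((1/2) : ℝ)) (spectrum ℝ Q) := fun x hx =>
    (Real.continuousAt_rpow_const x _ (Or.inl (hpos x hx).ne')).continuousWithinAt
  show cfc (fun x : ℝ => x ^ ((1/2) : ℝ)) Q * cfc (fun x : ℝ => x ^ ((1/2) : ℝ)) Q = Q
  rw [← cfc_mul _ _ Q hg hg]
  calc cfc (fun x : ℝ => x ^ ((1/2) : ℝ) * x ^ ((1/2) : ℝ)) Q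
      = cfc (fun x : ℝ => x) Q := by
        apply cfc_congr
        intro x hx
        have hx0 := hpos x hx
        dsimp only
        rw [← Real.rpow_add hx0]
        norm_num
    _ = Q := cfc_id' ℝ Q hQ

end Aux

/-- the bound `Q*_{D,λ} ≤ √6/2` under the event `R_{D,λ} ≤ 1/4`. -/
theorem stmt5
    {H : Type*} [NormedAddCommGroup H] [InnerProductSpace ℝ H] [CompleteSpace H]
    [TopologicalSpace.SeparableSpace H]
    [ContinuousFunctionalCalculus ℝ (H →L[ℝ] H) IsSelfAdjoint]
    (T S : H →L[ℝ] H) (hT : T.IsPositive) (hS : S.IsPositive)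
    (lam : ℝ) (hlam : 0 < lam)
    (hR : ‖opow (T + lam • 1) (-(1 / 2)) ∘L (T - S) ∘L opow (T + lam • 1) (-(1 / 2))‖
      ≤ 1 / 4) :
    ‖opow (T + lam • 1) (-(1 / 2)) ∘L opow (S + lam • 1) (1 / 2)‖ ≤ Real.sqrt 6 / 2 := by
  set P := T + lam • 1 with hPdef
  set Q := S + lam • 1 with hQdef
  have hPpos : P.IsPositive := hT.add (aux_smul_one_pos lam hlam.le)
  have hQpos : Q.IsPositive := hS.add (aux_smul_one_pos lam hlam.le)
  have hsP : spectrum ℝ P ⊆ Set.Ici lam := aux_spectrum_subset T hT lam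
  have hsQ : spectrum ℝ Q ⊆ Set.Ici lam := aux_spectrum_subset S hS lam
  set B := opow P (-(1/2)) with hBdef
  set A := opow Q (1/2) with hAdef
  have hBsa : IsSelfAdjoint B := cfc_predicate _ P
  have hAsa : IsSelfAdjoint A := cfc_predicate _ Q
  have hBPB : B * P * B = 1 := aux_BPB P hPpos.isSelfAdjoint lam hlam hsP
  have hAA : A * A = Q := aux_AA Q hQpos.isSelfAdjoint lam hlam hsQ
  -- the product and its adjoint
  set C := B * A with hCdef
  have hstarC : star C = A * B := by
    rw [hCdef, star_mul, hAsa.star_eq, hBsa.star_eq]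
  have hCC : C * star C = 1 - B * (T - S) * B := by
    rw [hstarC, hCdef]
    have h1 : B * A * (A * B) = B * (A * A) * B := by
      simp only [mul_assoc]
    rw [h1, hAA]
    have h2 : Q = P - (T - S) := by
      rw [hPdef, hQdef]; abel
    rw [h2, mul_sub, sub_mul, hBPB]
  have hRe : ‖B * (T - S) * B‖ ≤ 1 / 4 := by
    simpa only [mul_def, comp_assoc] using hR
  have hnorm : ‖C‖ * ‖C‖ ≤ 3 / 2 := by
    rw [← CStarRing.norm_self_mul_star, hCC]
    calc ‖(1 : H →L[ℝ] H) - B * (T - S) * B‖ ≤ ‖(1 : H →L[ℝ] H)‖ + ‖B * (T - S) * B‖ :=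
          norm_sub_le _ _
      _ ≤ 1 + 1/4 := by
          gcongr
          · rw [ContinuousLinearMap.one_def]; exact norm_id_le
      _ ≤ 3 / 2 := by norm_num
  have hgoal : ‖C‖ ≤ Real.sqrt 6 / 2 := by
    nlinarith [Real.sq_sqrt (show (0:ℝ) ≤ 6 by norm_num), Real.sqrt_nonneg 6, norm_nonneg C]
  simpa only [hCdef, mul_def] using hgoal
end

section
/- Let (Ω, F, P) be a probability space and let ξ : Ω → [0, ∞) be a random variable. Let A, b, c > 0. If for every δ ∈ (0, 1) one has P[ξ ≤ A·(log(c/δ))^b] ≥ 1 − δ, then E[ξ] ≤ c·Γ(b + 1)·A, where Γ denotes the Gamma function. -/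
open MeasureTheory

open Real Set in

lemma aux_rpow_mul_exp {s r : ℝ} (hs : 0 < s) (hr : 0 < r) :
    IntegrableOn (fun x : ℝ => x ^ (s - 1) * Real.exp (-(r * x))) (Set.Ioi 0) := by
  have h0 : IntegrableOn (fun y : ℝ => Real.exp (-y) * y ^ (s - 1)) (Set.Ioi 0) :=
    Real.GammaIntegral_convergent hs
  have h1 : IntegrableOn (fun x : ℝ => Real.exp (-(r * x)) * (r * x) ^ (s - 1)) (Set.Ioi 0) := by
    have := (integrableOn_Ioi_comp_mul_left_iff
      (fun y : ℝ => Real.exp (-y) * y ^ (s - 1)) 0 hr).mpr (by simpa using h0)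
    simpa using this
  have h2 : IntegrableOn
      (fun x : ℝ => ((r : ℝ) ^ (s - 1))⁻¹ * (Real.exp (-(r * x)) * (r * x) ^ (s - 1)))
      (Set.Ioi 0) := h1.const_mul _
  refine h2.congr_fun (fun x hx => ?_) measurableSet_Ioi
  have hx0 : (0:ℝ) < x := hx
  beta_reduce
  rw [Real.mul_rpow hr.le hx0.le]
  have : (r : ℝ) ^ (s - 1) ≠ 0 := (Real.rpow_pos_of_pos hr _).ne'
  field_simp

lemma aux_exp_neg_mul_rpow {p r : ℝ} (hp : 0 < p) (hr : 0 < r) :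
    IntegrableOn (fun x : ℝ => Real.exp (-(r * x ^ p))) (Set.Ioi 0) := by
  rw [← integrableOn_Ioi_comp_rpow_iff' _ (inv_ne_zero hp.ne')]
  refine (aux_rpow_mul_exp (s := p⁻¹) (by positivity) hr).congr_fun (fun x hx => ?_)
    measurableSet_Ioi
  have hx0 : (0:ℝ) < x := hx
  rw [smul_eq_mul, ← Real.rpow_mul hx0.le, inv_mul_cancel₀ hp.ne', Real.rpow_one]

open Real Set in
open scoped ENNReal in
/-- the probability-to-expectation lemma. -/
theorem stmt6
    {Ω : Type*} [MeasurableSpace Ω] (P : Measure Ω) [IsProbabilityMeasure P]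
    (ξ : Ω → ℝ) (hmeas : Measurable ξ) (hnn : ∀ ω, 0 ≤ ξ ω)
    (A b c : ℝ) (hA : 0 < A) (hb : 0 < b) (hc : 0 < c)
    (h : ∀ δ : ℝ, δ ∈ Set.Ioo (0 : ℝ) 1 →
      ENNReal.ofReal (1 - δ) ≤ P {ω | ξ ω ≤ A * Real.log (c / δ) ^ b}) :
    ∫⁻ ω, ENNReal.ofReal (ξ ω) ∂P ≤ ENNReal.ofReal (c * Real.Gamma (b + 1) * A) := by
  -- key pointwise tail bound
  have key : ∀ t : ℝ, t ∈ Set.Ioi (0:ℝ) →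
      P {ω | t < ξ ω} ≤ ENNReal.ofReal (c * Real.exp (-((t / A) ^ b⁻¹))) := by
    intro t ht
    have ht0 : (0:ℝ) < t := ht
    set x : ℝ := (t / A) ^ b⁻¹ with hx
    have hxnn : 0 ≤ x := Real.rpow_nonneg (by positivity) _
    set δ : ℝ := c * Real.exp (-x) with hδ
    have hδ0 : 0 < δ := by positivity
    by_cases h1 : δ < 1
    · have hh := h δ ⟨hδ0, h1⟩
      have hcd : c / δ = Real.exp x := by
        rw [hδ, Real.exp_neg]
        field_simp
      have hlog : Real.log (c / δ) = x := by rw [hcd, Real.log_exp]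
      have hset : A * Real.log (c / δ) ^ b = t := by
        rw [hlog, hx, ← Real.rpow_mul (by positivity), inv_mul_cancel₀ hb.ne', Real.rpow_one]
        field_simp
      rw [hset] at hh
      have hms : MeasurableSet {ω | ξ ω ≤ t} := hmeas measurableSet_Iic
      have hcompl : {ω | t < ξ ω} = {ω | ξ ω ≤ t}ᶜ := by ext ω; simp [not_le]
      rw [hcompl, prob_compl_eq_one_sub hms]
      have : (1 : ℝ≥0∞) - ENNReal.ofReal (1 - δ) = ENNReal.ofReal δ := by
        rw [← ENNReal.ofReal_one, ← ENNReal.ofReal_sub _ (by linarith)]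
        norm_num
      calc 1 - P {ω | ξ ω ≤ t} ≤ 1 - ENNReal.ofReal (1 - δ) := tsub_le_tsub_left hh 1
        _ = ENNReal.ofReal δ := this
    · push_neg at h1
      calc P {ω | t < ξ ω} ≤ 1 := prob_le_one
        _ ≤ ENNReal.ofReal δ := by
          rw [← ENNReal.ofReal_one]
          exact ENNReal.ofReal_le_ofReal h1
  -- pointwise identity of the dominating function
  have hpt : ∀ t : ℝ, t ∈ Set.Ioi (0:ℝ) →
      c * Real.exp (-((t / A) ^ b⁻¹)) = c * Real.exp (-(A ^ (-b⁻¹) * t ^ b⁻¹)) := by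
    intro t ht
    have ht0 : (0:ℝ) < t := ht
    congr 2
    rw [Real.div_rpow ht0.le hA.le, Real.rpow_neg hA.le, div_eq_mul_inv, mul_comm]
  -- integrability of the dominating function
  have hint : IntegrableOn (fun t : ℝ => c * Real.exp (-((t / A) ^ b⁻¹))) (Set.Ioi 0) := by
    have h0 : IntegrableOn (fun t : ℝ => c * Real.exp (-(A ^ (-b⁻¹) * t ^ b⁻¹)))
        (Set.Ioi 0) :=
      (aux_exp_neg_mul_rpow (by positivity) (Real.rpow_pos_of_pos hA _)).const_mul c
    exact h0.congr_fun (fun t ht => (hpt t ht).symm) measurableSet_Ioi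
  -- the value of the integral
  have hval : ∫ t in Set.Ioi (0:ℝ), c * Real.exp (-((t / A) ^ b⁻¹)) =
      c * Real.Gamma (b + 1) * A := by
    rw [setIntegral_congr_fun measurableSet_Ioi hpt]
    simp_rw [neg_mul_eq_neg_mul (A ^ (-b⁻¹))]
    rw [MeasureTheory.integral_const_mul, integral_exp_neg_mul_rpow (by positivity)
      (Real.rpow_pos_of_pos hA _)]
    rw [← Real.rpow_mul hA.le, show -b⁻¹ * (-1 / b⁻¹) = (1:ℝ) by field_simp, Real.rpow_one,
      one_div, inv_inv]
    ring
  -- layer cake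
  rw [lintegral_eq_lintegral_meas_lt P (Filter.Eventually.of_forall hnn) hmeas.aemeasurable]
  calc ∫⁻ t in Set.Ioi (0:ℝ), P {ω | t < ξ ω}
      ≤ ∫⁻ t in Set.Ioi (0:ℝ), ENNReal.ofReal (c * Real.exp (-((t / A) ^ b⁻¹))) := by
        refine setLIntegral_mono ?_ key
        fun_prop
    _ = ENNReal.ofReal (∫ t in Set.Ioi (0:ℝ), c * Real.exp (-((t / A) ^ b⁻¹))) := by
        rw [← ofReal_integral_eq_lintegral_ofReal hint
          (Filter.Eventually.of_forall fun t => by positivity)]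
    _ ≤ ENNReal.ofReal (c * Real.Gamma (b + 1) * A) := by rw [hval]
end
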